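/- Let Φ(x) = (2π)^{−1/2} ∫_{−∞}^x e^{−t²/2} dt be the standard normal cumulative distribution function, and let D > 0, S > 0. Define C = {(x,y) ∈ ℝ² : x > D, y > S, x − D ≤ 3√y}. Then for all (x₁,y₁), (x₂,y₂) ∈ C, |log Φ((D−x₁)/√y₁) − log Φ((D−x₂)/√y₂)| ≤ 3.284·(3 + D/√S)·(|log x₁ − log x₂| + |log y₁ − log y₂|). -/

import Mathlib

open MeasureTheory Real Set Filter Topology


namespace Stmt11

/-- The standard normal cumulative distribution function
`Φ(x) = (2π)^{-1/2} ∫_{-∞}^x e^{-t²/2} dt`. -/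
noncomputable def Phi (x : ℝ) : ℝ :=
  (2 * Real.pi) ^ (-(1 / 2) : ℝ) * ∫ t in Set.Iic x, Real.exp (-t ^ 2 / 2)

noncomputable def gInt (z : ℝ) : ℝ := ∫ t in Set.Iic z, Real.exp (-t ^ 2 / 2)

lemma gauss_integrable : Integrable (fun t : ℝ => Real.exp (-t ^ 2 / 2)) := by
  have h := integrable_exp_neg_mul_sq (b := (1/2 : ℝ)) (by norm_num)
  have he : (fun t : ℝ => Real.exp (-t ^ 2 / 2)) = fun t : ℝ => Real.exp (-(1/2 : ℝ) * t ^ 2) := by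
    funext t; congr 1; ring
  rw [he]; exact h

lemma exp_hasDeriv (t : ℝ) :
    HasDerivAt (fun t : ℝ => Real.exp (-t ^ 2 / 2)) (Real.exp (-t ^ 2 / 2) * (-t)) t := by
  have h1 : HasDerivAt (fun t : ℝ => -t ^ 2 / 2) (-t) t := by
    have := ((hasDerivAt_pow 2 t).neg.div_const 2)
    refine this.congr_deriv ?_
    push_cast; ring
  exact h1.exp

lemma sixpow_le (t : ℝ) :
    (t + 3) ^ 6 * Real.exp (-t ^ 2 / 2) ≤ 13824 * Real.exp (-(1/4 : ℝ) * t ^ 2) := by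
  have h2 : t ^ 2 / 12 + 1 ≤ Real.exp (t ^ 2 / 12) := by
    have := Real.add_one_le_exp (t ^ 2 / 12); linarith
  have h4 : (t + 3) ^ 2 ≤ 24 * Real.exp (t ^ 2 / 12) := by nlinarith [sq_nonneg (t - 3)]
  have h5 : (t + 3) ^ 6 ≤ 13824 * Real.exp (t ^ 2 / 4) := by
    have e1 : (t + 3) ^ 6 = ((t + 3) ^ 2) ^ 3 := by ring
    have e2 : (24 * Real.exp (t ^ 2 / 12)) ^ 3 = 13824 * Real.exp (t ^ 2 / 4) := by
      rw [mul_pow, ← Real.exp_nat_mul]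
      norm_num
      ring
    rw [e1, ← e2]
    exact pow_le_pow_left₀ (sq_nonneg _) h4 3
  calc (t + 3) ^ 6 * Real.exp (-t ^ 2 / 2)
      ≤ 13824 * Real.exp (t ^ 2 / 4) * Real.exp (-t ^ 2 / 2) :=
        mul_le_mul_of_nonneg_right h5 (Real.exp_pos _).le
    _ = 13824 * Real.exp (-(1/4 : ℝ) * t ^ 2) := by
        rw [mul_assoc, ← Real.exp_add]; congr 2; ring

lemma pg_integrable : Integrable (fun t : ℝ => (t + 3) ^ 6 * Real.exp (-t ^ 2 / 2)) := by
  have hg : Integrable (fun t : ℝ => 13824 * Real.exp (-(1/4 : ℝ) * t ^ 2)) :=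
    (integrable_exp_neg_mul_sq (by norm_num)).const_mul _
  refine hg.mono' ?_ ?_
  · exact (Continuous.mul (by continuity) (by continuity)).aestronglyMeasurable
  · filter_upwards with t
    rw [Real.norm_eq_abs, abs_of_nonneg (by positivity)]
    exact sixpow_le t

lemma poly_hasDeriv (t : ℝ) :
    HasDerivAt (fun t : ℝ => -t ^ 5 - 18 * t ^ 4 - 140 * t ^ 3 - 612 * t ^ 2 - 1635 * t - 2682)
      (-(5 * t ^ 4) - 72 * t ^ 3 - 420 * t ^ 2 - 1224 * t - 1635) t := by
  have h5 := (hasDerivAt_pow 5 t).neg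
  have h4 := (hasDerivAt_pow 4 t).const_mul (18 : ℝ)
  have h3 := (hasDerivAt_pow 3 t).const_mul (140 : ℝ)
  have h2 := (hasDerivAt_pow 2 t).const_mul (612 : ℝ)
  have h1 := (hasDerivAt_id t).const_mul (1635 : ℝ)
  have := ((((h5.sub h4).sub h3).sub h2).sub h1).sub_const (2682 : ℝ)
  refine this.congr_deriv ?_
  push_cast; ring

lemma ftc : ∫ t in Set.Iic (-3 : ℝ), ((t + 3) ^ 6 - 2364) * Real.exp (-t ^ 2 / 2)
    = -720 * Real.exp (-(9/2) : ℝ) := by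
  set F : ℝ → ℝ := fun t =>
    (-t ^ 5 - 18 * t ^ 4 - 140 * t ^ 3 - 612 * t ^ 2 - 1635 * t - 2682) * Real.exp (-t ^ 2 / 2)
    with hF
  have hderiv : ∀ t : ℝ, HasDerivAt F (((t + 3) ^ 6 - 2364) * Real.exp (-t ^ 2 / 2)) t := by
    intro t
    have := (poly_hasDeriv t).mul (exp_hasDeriv t)
    refine this.congr_deriv ?_
    ring
  have f'int : IntegrableOn (fun t : ℝ => ((t + 3) ^ 6 - 2364) * Real.exp (-t ^ 2 / 2))
      (Set.Iic (-3 : ℝ)) := by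
    have : (fun t : ℝ => ((t + 3) ^ 6 - 2364) * Real.exp (-t ^ 2 / 2))
        = fun t => (t + 3) ^ 6 * Real.exp (-t ^ 2 / 2) - 2364 * Real.exp (-t ^ 2 / 2) := by
      funext t; ring
    rw [this]
    exact (pg_integrable.sub (gauss_integrable.const_mul 2364)).integrableOn
  have hsq : Tendsto (fun t : ℝ => t ^ 2 / 2) atBot atTop := by
    apply Tendsto.atTop_div_const (by norm_num : (0:ℝ) < 2)
    have : (fun t : ℝ => t ^ 2) = fun t : ℝ => (-t) ^ 2 := by funext t; ring
    rw [this]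
    exact (tendsto_pow_atTop (by norm_num)).comp tendsto_neg_atBot_atTop
  have key : Tendsto (fun t : ℝ => t ^ 6 * Real.exp (-t ^ 2 / 2)) atBot (𝓝 0) := by
    have h0 : Tendsto (fun x : ℝ => 8 * (x ^ 3 * Real.exp (-x))) atTop (𝓝 (8 * 0)) :=
      (tendsto_pow_mul_exp_neg_atTop_nhds_zero 3).const_mul 8
    have := h0.comp hsq
    simp only [mul_zero] at this
    convert this using 2 with t
    simp only [Function.comp]
    have harg : -t ^ 2 / 2 = -(t ^ 2 / 2) := by ring
    rw [harg]
    ring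
  have htend : Tendsto F atBot (𝓝 0) := by
    apply squeeze_zero_norm' (a := fun t : ℝ => 75 * (t ^ 6 * Real.exp (-t ^ 2 / 2)))
    · filter_upwards [Filter.Iic_mem_atBot (-3 : ℝ)] with t ht
      rw [hF, Real.norm_eq_abs, abs_mul, abs_of_nonneg (Real.exp_pos _).le]
      have ht' : t ≤ -3 := ht
      have q0 : -t ≥ 3 := by linarith
      have q1 : t ^ 2 ≥ -3 * t := by nlinarith
      have q2 : -t ^ 3 ≥ 3 * t ^ 2 := by nlinarith [sq_nonneg t]
      have q3 : t ^ 4 ≥ -3 * t ^ 3 := by nlinarith [sq_nonneg t, sq_nonneg (t + 3)]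
      have q4 : -t ^ 5 ≥ 3 * t ^ 4 := by nlinarith [sq_nonneg (t ^ 2), sq_nonneg (t ^ 2 + 3 * t)]
      have q5 : t ^ 6 ≥ -3 * t ^ 5 := by nlinarith [sq_nonneg (t ^ 2), sq_nonneg (t ^ 2 + 3 * t), sq_nonneg t]
      have habs : |(-t ^ 5 - 18 * t ^ 4 - 140 * t ^ 3 - 612 * t ^ 2 - 1635 * t - 2682)|
          ≤ 75 * t ^ 6 := by
        rw [abs_le]
        constructor <;> linarith
      calc |(-t ^ 5 - 18 * t ^ 4 - 140 * t ^ 3 - 612 * t ^ 2 - 1635 * t - 2682)| * Real.exp (-t ^ 2 / 2)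
          ≤ 75 * t ^ 6 * Real.exp (-t ^ 2 / 2) :=
            mul_le_mul_of_nonneg_right habs (Real.exp_pos _).le
        _ = 75 * (t ^ 6 * Real.exp (-t ^ 2 / 2)) := by ring
    · simpa using key.const_mul (75 : ℝ)
  have hcont : ContinuousWithinAt F (Set.Iic (-3 : ℝ)) (-3) :=
    (hderiv (-3)).continuousAt.continuousWithinAt
  have := integral_Iic_of_hasDerivAt_of_tendsto hcont (fun x _ => hderiv x) f'int htend
  rw [this, hF]
  norm_num


lemma gInt_pos (z : ℝ) : 0 < gInt z := by
  rw [gInt]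
  rw [setIntegral_pos_iff_support_of_nonneg_ae
    (Filter.Eventually.of_forall fun t => (Real.exp_pos _).le) gauss_integrable.integrableOn]
  have hsupp : Function.support (fun t : ℝ => Real.exp (-t ^ 2 / 2)) = Set.univ := by
    ext t; simp [Function.mem_support, (Real.exp_pos _).ne']
  rw [hsupp, Set.univ_inter]
  simp [Real.volume_Iic]

lemma gInt_hasDeriv (z : ℝ) : HasDerivAt gInt (Real.exp (-z ^ 2 / 2)) z := by
  have heq : gInt = fun w => gInt 0 + ∫ t in (0:ℝ)..w, Real.exp (-t ^ 2 / 2) := by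
    funext w
    have := intervalIntegral.integral_Iic_sub_Iic (gauss_integrable.integrableOn (s := Set.Iic 0))
      (gauss_integrable.integrableOn (s := Set.Iic w))
    rw [gInt, gInt]
    linarith
  rw [heq]
  apply HasDerivAt.const_add
  apply intervalIntegral.integral_hasDerivAt_right
    (gauss_integrable.intervalIntegrable)
    (gauss_integrable.aestronglyMeasurable.stronglyMeasurableAtFilter)
  exact ((Real.continuous_exp.comp (by continuity)).continuousAt)

lemma A_lb : Real.exp (-(9/2) : ℝ) ≤ 3.284 * gInt (-3) := by
  have h2 : ∫ t in Set.Iic (-3:ℝ), (-2364 : ℝ) * Real.exp (-t ^ 2 / 2)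
      ≤ ∫ t in Set.Iic (-3:ℝ), ((t + 3) ^ 6 - 2364) * Real.exp (-t ^ 2 / 2) := by
    apply setIntegral_mono ((gauss_integrable.const_mul _).integrableOn)
    · have : (fun t : ℝ => ((t + 3) ^ 6 - 2364) * Real.exp (-t ^ 2 / 2))
          = fun t => (t + 3) ^ 6 * Real.exp (-t ^ 2 / 2) - 2364 * Real.exp (-t ^ 2 / 2) := by
        funext t; ring
      rw [this]
      exact (pg_integrable.sub (gauss_integrable.const_mul 2364)).integrableOn
    · intro t
      have h6 : (0:ℝ) ≤ (t + 3) ^ 6 := by positivity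
      nlinarith [Real.exp_pos (-t ^ 2 / 2)]
  rw [ftc, integral_const_mul] at h2
  have hA : (-2364 : ℝ) * gInt (-3) ≤ -720 * Real.exp (-(9/2) : ℝ) := h2
  have hE := Real.exp_pos (-(9/2) : ℝ)
  norm_num
  linarith

lemma ratio {z : ℝ} (hz : z ∈ Set.Icc (-3:ℝ) 0) : Real.exp (-z ^ 2 / 2) ≤ 3.284 * gInt z := by
  set h : ℝ → ℝ := fun w => 3.284 * gInt w - Real.exp (-w ^ 2 / 2) with hh
  have hd : ∀ w : ℝ, HasDerivAt h ((3.284 + w) * Real.exp (-w ^ 2 / 2)) w := by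
    intro w
    have := ((gInt_hasDeriv w).const_mul (3.284:ℝ)).sub (exp_hasDeriv w)
    refine this.congr_deriv ?_
    ring
  have mono : MonotoneOn h (Set.Icc (-3:ℝ) 0) := by
    apply monotoneOn_of_deriv_nonneg (convex_Icc _ _)
    · exact fun w _ => ((hd w).differentiableAt).continuousAt.continuousWithinAt
    · exact fun w _ => ((hd w).differentiableAt).differentiableWithinAt
    · intro w hw
      rw [interior_Icc] at hw
      rw [(hd w).deriv]
      have : (0:ℝ) ≤ 3.284 + w := by have := hw.1; norm_num; linarith
      positivity
  have h0 : 0 ≤ h (-3) := by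
    have := A_lb
    simp only [hh]
    norm_num at this ⊢
    linarith
  have hm : h (-3) ≤ h z := mono ⟨le_refl _, by norm_num⟩ hz hz.1
  have : 0 ≤ h z := le_trans h0 hm
  simp only [hh] at this
  linarith

lemma loglip {z₁ z₂ : ℝ} (h₁ : z₁ ∈ Set.Icc (-3:ℝ) 0) (h₂ : z₂ ∈ Set.Icc (-3:ℝ) 0) :
    |Real.log (gInt z₁) - Real.log (gInt z₂)| ≤ 3.284 * |z₁ - z₂| := by
  have key := (convex_Icc (-3:ℝ) 0).norm_image_sub_le_of_norm_hasDerivWithin_le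
    (f := fun z => Real.log (gInt z)) (f' := fun z => Real.exp (-z ^ 2 / 2) / gInt z)
    (C := 3.284)
    (fun x _ => ((gInt_hasDeriv x).log (gInt_pos x).ne').hasDerivWithinAt)
    (fun x hx => by
      rw [Real.norm_eq_abs,
        abs_of_nonneg (le_of_lt (div_pos (Real.exp_pos _) (gInt_pos x)))]
      rw [div_le_iff₀ (gInt_pos x)]
      calc Real.exp (-x ^ 2 / 2) ≤ 3.284 * gInt x := ratio hx
        _ = 3.284 * gInt x := by ring)
    h₂ h₁
  simpa [Real.norm_eq_abs] using key


lemma one_sub_div_le_log {a b : ℝ} (ha : 0 < a) (hab : a ≤ b) :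
    1 - a / b ≤ Real.log b - Real.log a := by
  have hb : 0 < b := lt_of_lt_of_le ha hab
  have h := Real.log_le_sub_one_of_pos (show 0 < a / b by positivity)
  rw [Real.log_div ha.ne' hb.ne'] at h
  linarith

lemma abs_sub_le_max_mul {a b : ℝ} (ha : 0 < a) (hb : 0 < b) :
    |a - b| ≤ max a b * |Real.log a - Real.log b| := by
  rcases le_total a b with h | h
  · have hlog := one_sub_div_le_log ha h
    have hba : b * (a / b) = a := by field_simp
    have h1 : b - a ≤ b * (Real.log b - Real.log a) := by
      nlinarith [mul_le_mul_of_nonneg_left hlog hb.le]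
    rw [abs_of_nonpos (by linarith), abs_of_nonpos (by
      have := Real.log_le_log ha h
      linarith [Real.log_le_log ha h])]
    rw [max_eq_right h]
    linarith
  · have hlog := one_sub_div_le_log hb h
    have hba : a * (b / a) = b := by field_simp
    have h1 : a - b ≤ a * (Real.log a - Real.log b) := by
      nlinarith [mul_le_mul_of_nonneg_left hlog ha.le]
    rw [abs_of_nonneg (by linarith), abs_of_nonneg (by linarith [Real.log_le_log hb h])]
    rw [max_eq_left h]
    linarith

lemma zdiff {D S x₁ y₁ x₂ y₂ : ℝ} (hD : 0 < D) (hS : 0 < S)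
    (hx₁ : D < x₁) (hy₁ : S < y₁) (hC₁ : x₁ - D ≤ 3 * Real.sqrt y₁)
    (hx₂ : D < x₂) (hy₂ : S < y₂) (hC₂ : x₂ - D ≤ 3 * Real.sqrt y₂)
    (hyy : y₁ ≤ y₂) :
    |(D - x₁) / Real.sqrt y₁ - (D - x₂) / Real.sqrt y₂| ≤
      (3 + D / Real.sqrt S) * (|Real.log x₁ - Real.log x₂| + |Real.log y₁ - Real.log y₂|) := by
  set s₁ := Real.sqrt y₁ with hs1def
  set s₂ := Real.sqrt y₂ with hs2def
  have hy₁0 : (0:ℝ) < y₁ := hS.trans hy₁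
  have hy₂0 : (0:ℝ) < y₂ := hS.trans hy₂
  have hs₁ : 0 < s₁ := Real.sqrt_pos.2 hy₁0
  have hs₂ : 0 < s₂ := Real.sqrt_pos.2 hy₂0
  have hs₁₂ : s₁ ≤ s₂ := Real.sqrt_le_sqrt hyy
  have hsS : 0 < Real.sqrt S := Real.sqrt_pos.2 hS
  have hsS₂ : Real.sqrt S ≤ s₂ := Real.sqrt_le_sqrt hy₂.le
  have hdec : (D - x₁) / s₁ - (D - x₂) / s₂ = (D - x₁) * (1 / s₁ - 1 / s₂) + (x₂ - x₁) / s₂ := by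
    field_simp
    ring
  have hDS : 0 < D / Real.sqrt S := div_pos hD hsS
  -- term 1
  have t1 : |(D - x₁) * (1 / s₁ - 1 / s₂)| ≤ (3 / 2) * |Real.log y₁ - Real.log y₂| := by
    have hinv : 1 / s₂ ≤ 1 / s₁ := one_div_le_one_div_of_le hs₁ hs₁₂
    rw [abs_mul, abs_of_nonpos (by linarith), abs_of_nonneg (by linarith)]
    have h3 : (x₁ - D) * (1 / s₁ - 1 / s₂) ≤ 3 * s₁ * (1 / s₁ - 1 / s₂) := by
      apply mul_le_mul_of_nonneg_right hC₁ (by linarith)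
    have h4 : 3 * s₁ * (1 / s₁ - 1 / s₂) = 3 * (1 - s₁ / s₂) := by
      field_simp
    have h5 : 1 - s₁ / s₂ ≤ Real.log s₂ - Real.log s₁ := one_sub_div_le_log hs₁ hs₁₂
    have h6 : Real.log s₂ - Real.log s₁ = (1 / 2) * (Real.log y₂ - Real.log y₁) := by
      rw [hs1def, hs2def, Real.log_sqrt hy₁0.le, Real.log_sqrt hy₂0.le]
      ring
    have h7 : Real.log y₂ - Real.log y₁ ≤ |Real.log y₁ - Real.log y₂| := by
      rw [abs_sub_comm]; exact le_abs_self _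
    have hx1D : -(D - x₁) = x₁ - D := by ring
    rw [hx1D]
    nlinarith
  -- term 2
  have t2 : |(x₂ - x₁) / s₂| ≤ (3 + D / Real.sqrt S) * |Real.log x₁ - Real.log x₂| := by
    rw [abs_div, abs_of_pos hs₂]
    have h1 : |x₂ - x₁| ≤ max x₁ x₂ * |Real.log x₁ - Real.log x₂| := by
      rw [abs_sub_comm]
      exact abs_sub_le_max_mul (hD.trans hx₁) (hD.trans hx₂)
    have h2 : max x₁ x₂ ≤ D + 3 * s₂ := by
      apply max_le
      · have : 3 * s₁ ≤ 3 * s₂ := by linarith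
        linarith
      · linarith
    have h3 : |x₂ - x₁| / s₂ ≤ (D + 3 * s₂) / s₂ * |Real.log x₁ - Real.log x₂| := by
      rw [div_mul_eq_mul_div, div_le_div_iff₀ hs₂ hs₂]
      have := h1.trans (mul_le_mul_of_nonneg_right h2 (abs_nonneg _))
      nlinarith [abs_nonneg (x₂ - x₁), abs_nonneg (Real.log x₁ - Real.log x₂)]
    have h4 : (D + 3 * s₂) / s₂ ≤ 3 + D / Real.sqrt S := by
      rw [add_div]
      have e1 : 3 * s₂ / s₂ = 3 := by field_simp
      have e2 : D / s₂ ≤ D / Real.sqrt S := by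
        apply div_le_div_of_nonneg_left hD.le hsS hsS₂
      linarith
    calc |x₂ - x₁| / s₂ ≤ (D + 3 * s₂) / s₂ * |Real.log x₁ - Real.log x₂| := h3
      _ ≤ (3 + D / Real.sqrt S) * |Real.log x₁ - Real.log x₂| :=
        mul_le_mul_of_nonneg_right h4 (abs_nonneg _)
  calc |(D - x₁) / s₁ - (D - x₂) / s₂|
      ≤ |(D - x₁) * (1 / s₁ - 1 / s₂)| + |(x₂ - x₁) / s₂| := by
        rw [hdec]; exact abs_add_le _ _
    _ ≤ (3 / 2) * |Real.log y₁ - Real.log y₂|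
        + (3 + D / Real.sqrt S) * |Real.log x₁ - Real.log x₂| := add_le_add t1 t2
    _ ≤ (3 + D / Real.sqrt S) * (|Real.log x₁ - Real.log x₂| + |Real.log y₁ - Real.log y₂|) := by
        nlinarith [abs_nonneg (Real.log y₁ - Real.log y₂), abs_nonneg (Real.log x₁ - Real.log x₂)]

lemma main_aux (D S : ℝ) (hD : 0 < D) (hS : 0 < S) (x₁ y₁ x₂ y₂ : ℝ)
    (hx₁ : D < x₁) (hy₁ : S < y₁) (hC₁ : x₁ - D ≤ 3 * Real.sqrt y₁)
    (hx₂ : D < x₂) (hy₂ : S < y₂) (hC₂ : x₂ - D ≤ 3 * Real.sqrt y₂)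
    (hyy : y₁ ≤ y₂) :
    |Real.log (Phi ((D - x₁) / Real.sqrt y₁)) - Real.log (Phi ((D - x₂) / Real.sqrt y₂))| ≤
      3.284 * (3 + D / Real.sqrt S) *
        (|Real.log x₁ - Real.log x₂| + |Real.log y₁ - Real.log y₂|) := by
  have hc : (0:ℝ) < (2 * Real.pi) ^ (-(1 / 2) : ℝ) :=
    Real.rpow_pos_of_pos (by positivity) _
  have hPhi : ∀ z : ℝ, Real.log (Phi z)
      = Real.log ((2 * Real.pi) ^ (-(1 / 2) : ℝ)) + Real.log (gInt z) := by
    intro z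
    rw [Phi, show (∫ t in Set.Iic z, Real.exp (-t ^ 2 / 2)) = gInt z from rfl,
      Real.log_mul hc.ne' (gInt_pos z).ne']
  have hy₁0 : (0:ℝ) < y₁ := hS.trans hy₁
  have hy₂0 : (0:ℝ) < y₂ := hS.trans hy₂
  have hs₁ : 0 < Real.sqrt y₁ := Real.sqrt_pos.2 hy₁0
  have hs₂ : 0 < Real.sqrt y₂ := Real.sqrt_pos.2 hy₂0
  have hz₁ : (D - x₁) / Real.sqrt y₁ ∈ Set.Icc (-3:ℝ) 0 := by
    constructor
    · rw [le_div_iff₀ hs₁]; linarith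
    · apply div_nonpos_of_nonpos_of_nonneg (by linarith) hs₁.le
  have hz₂ : (D - x₂) / Real.sqrt y₂ ∈ Set.Icc (-3:ℝ) 0 := by
    constructor
    · rw [le_div_iff₀ hs₂]; linarith
    · apply div_nonpos_of_nonpos_of_nonneg (by linarith) hs₂.le
  rw [hPhi, hPhi]
  have heq : Real.log ((2 * Real.pi) ^ (-(1 / 2) : ℝ)) + Real.log (gInt ((D - x₁) / Real.sqrt y₁))
      - (Real.log ((2 * Real.pi) ^ (-(1 / 2) : ℝ)) + Real.log (gInt ((D - x₂) / Real.sqrt y₂)))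
      = Real.log (gInt ((D - x₁) / Real.sqrt y₁)) - Real.log (gInt ((D - x₂) / Real.sqrt y₂)) := by
    ring
  rw [heq]
  calc |Real.log (gInt ((D - x₁) / Real.sqrt y₁)) - Real.log (gInt ((D - x₂) / Real.sqrt y₂))|
      ≤ 3.284 * |(D - x₁) / Real.sqrt y₁ - (D - x₂) / Real.sqrt y₂| := loglip hz₁ hz₂
    _ ≤ 3.284 * ((3 + D / Real.sqrt S) *
        (|Real.log x₁ - Real.log x₂| + |Real.log y₁ - Real.log y₂|)) := by
        apply mul_le_mul_of_nonneg_left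
          (zdiff hD hS hx₁ hy₁ hC₁ hx₂ hy₂ hC₂ hyy) (by norm_num)
    _ = 3.284 * (3 + D / Real.sqrt S) *
        (|Real.log x₁ - Real.log x₂| + |Real.log y₁ - Real.log y₂|) := by ring


/-- Lemma 4: the deadline objective `Φ((D−x)/√y)` is `3.284(3 + D/√S)`-Lipschitz on the
log-log scale with respect to the `L1` norm on the region
`C = {(x,y) : x > D, y > S, x − D ≤ 3√y}`. -/
theorem stmt_11 (D S : ℝ) (hD : 0 < D) (hS : 0 < S) (x₁ y₁ x₂ y₂ : ℝ)
    (hx₁ : D < x₁) (hy₁ : S < y₁) (hC₁ : x₁ - D ≤ 3 * Real.sqrt y₁)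
    (hx₂ : D < x₂) (hy₂ : S < y₂) (hC₂ : x₂ - D ≤ 3 * Real.sqrt y₂) :
    |Real.log (Phi ((D - x₁) / Real.sqrt y₁)) - Real.log (Phi ((D - x₂) / Real.sqrt y₂))| ≤
      3.284 * (3 + D / Real.sqrt S) *
        (|Real.log x₁ - Real.log x₂| + |Real.log y₁ - Real.log y₂|) := by
  rcases le_total y₁ y₂ with h | h
  · exact main_aux D S hD hS x₁ y₁ x₂ y₂ hx₁ hy₁ hC₁ hx₂ hy₂ hC₂ h
  · have := main_aux D S hD hS x₂ y₂ x₁ y₁ hx₂ hy₂ hC₂ hx₁ hy₁ hC₁ h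
    rw [abs_sub_comm (Real.log (Phi ((D - x₂) / Real.sqrt y₂))),
      abs_sub_comm (Real.log x₂), abs_sub_comm (Real.log y₂)] at this
    exact this


end Stmt11
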